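/- Let V be a complete discrete valuation ring with uniformiser π, let M and N be V-modules, and let S ⊆ M and T ⊆ N be V-submodules that are compactoid in M and in N, respectively. Then the image of S ⊗_V T in M ⊗_V N is a compactoid V-submodule of M ⊗_V N, i.e., its image in (M ⊗_V N)/π^n(M ⊗_V N) is a finitely generated V-module for every n ∈ ℕ. (One direction of Proposition 4.5 on the compatibility of the compactoid bornology with completed tensor products.) -/

import Mathlib

open Pointwise TensorProduct

/-- `S` is a compactoid submodule of `M`: for every `n`, the image of `S` in
`M/πⁿM` is finitely generated, i.e. there is a finite `Fₙ ⊆ M` with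
`S ⊆ V·Fₙ + πⁿ M`. -/
def CompactoidIn {V : Type*} [CommRing V] (π : V) {M : Type*} [AddCommGroup M]
    [Module V M] (S : Submodule V M) : Prop :=
  ∀ n : ℕ, ∃ F : Finset M,
    S ≤ Submodule.span V (F : Set M) ⊔ π ^ n • (⊤ : Submodule V M)

/-- One direction of Proposition 4.5: if `S ⊆ M` and `T ⊆ N` are compactoid
submodules, then the image of `S ⊗ T` in `M ⊗ N` is a compactoid submodule of
`M ⊗ N`. -/
theorem compactoidIn_tensor
    {V : Type*} [CommRing V] [IsDomain V] [IsDiscreteValuationRing V]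
    (π : V) (hπ : Irreducible π) [IsAdicComplete (Ideal.span {π}) V]
    {M N : Type*} [AddCommGroup M] [Module V M] [AddCommGroup N] [Module V N]
    (S : Submodule V M) (T : Submodule V N)
    (hS : CompactoidIn π S) (hT : CompactoidIn π T) :
    CompactoidIn π (LinearMap.range (TensorProduct.mapIncl S T)) := by
  intro n
  obtain ⟨F, hF⟩ := hS n
  obtain ⟨G, hG⟩ := hT n
  classical
  refine ⟨(F ×ˢ G).image fun p => p.1 ⊗ₜ[V] p.2, ?_⟩
  rw [TensorProduct.mapIncl, TensorProduct.range_map_eq_span_tmul, Submodule.span_le]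
  rintro _ ⟨⟨s, hs⟩, ⟨t, ht⟩, rfl⟩
  simp only [Submodule.coe_subtype]
  obtain ⟨a, ha, b, hb, rfl⟩ := Submodule.mem_sup.mp (hF hs)
  obtain ⟨c, hc, d, hd, rfl⟩ := Submodule.mem_sup.mp (hG ht)
  rw [← SetLike.mem_coe, Submodule.coe_pointwise_smul] at hb hd
  obtain ⟨m, -, rfl⟩ := Set.mem_smul_set.mp hb
  obtain ⟨k, -, rfl⟩ := Set.mem_smul_set.mp hd
  have hleft : a ⊗ₜ[V] c ∈
      Submodule.span V (((F ×ˢ G).image fun p => p.1 ⊗ₜ[V] p.2 : Finset _) : Set (M ⊗[V] N)) := by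
    have : ((((F ×ˢ G).image fun p => p.1 ⊗ₜ[V] p.2 : Finset _) : Set (M ⊗[V] N))) =
        Set.image2 (fun x y => x ⊗ₜ[V] y) (F : Set M) (G : Set N) := by
      rw [Finset.coe_image, Finset.coe_product, Set.image_prod]
    rw [this]
    exact Submodule.map₂_span_span V (TensorProduct.mk V M N) _ _ ▸
      Submodule.apply_mem_map₂ (TensorProduct.mk V M N) ha hc
  have hmem : ∀ x : M ⊗[V] N, π ^ n • x ∈ π ^ n • (⊤ : Submodule V (M ⊗[V] N)) :=
    fun x => Submodule.smul_mem_pointwise_smul x _ _ trivial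
  have : (a + π ^ n • m) ⊗ₜ[V] (c + π ^ n • k) =
      a ⊗ₜ[V] c + (π ^ n • (a ⊗ₜ[V] k) + π ^ n • (m ⊗ₜ[V] c) + π ^ n • (m ⊗ₜ[V] (π ^ n • k))) := by
    simp [TensorProduct.tmul_add, TensorProduct.add_tmul, TensorProduct.tmul_smul,
      TensorProduct.smul_tmul']
    abel
  rw [this]
  exact Submodule.add_mem _ (Submodule.mem_sup_left hleft)
    (Submodule.mem_sup_right (Submodule.add_mem _ (Submodule.add_mem _ (hmem _) (hmem _)) (hmem _)))
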